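/- If a is a rational number with v_3(a) = 0, then there is no rational x such that the point (x, 0) is at rational distance from all four vertices (0, ±1/2), (a, ±1/2) with x satisfying v_3(x) ≥ 0, except possibly x = a/2; and x = a/2 is also impossible since a and 1 cannot both be legs of a Pythagorean triangle when v_3(a) = 0. -/

import Mathlib

private lemma zmod3_key : ∀ a b c d : ZMod 3, c ≠ 0 → d ≠ 0 →
    (2*a*d)^2 = (2*c*b)^2 + (b*d)^2 → a = 0 ∧ b = 0 := by decide

private lemma num_den_not_dvd (u : ℚ) (hu : u ≠ 0) (h0 : padicValRat 3 u = 0) :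
    ¬ (3:ℤ) ∣ u.num ∧ ¬ (3:ℕ) ∣ u.den := by
  have hcop := u.reduced
  have hnum : u.num ≠ 0 := Rat.num_ne_zero.2 hu
  have hden : u.den ≠ 0 := u.den_nz
  by_cases h1 : (3:ℤ) ∣ u.num
  · have h2 : ¬ (3:ℕ) ∣ u.den := by
      intro h2
      have h1' : (3:ℕ) ∣ u.num.natAbs := Int.natAbs_dvd_natAbs.2 (by simpa using h1)
      have := Nat.Coprime.eq_one_of_dvd (Nat.Coprime.coprime_dvd_left h1' hcop) h2
      norm_num at this
    have hv1 : 1 ≤ padicValInt 3 u.num :=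
      one_le_padicValNat_of_dvd (by simpa using hnum)
        (Int.natAbs_dvd_natAbs.2 (by simpa using h1))
    have hv2 : padicValNat 3 u.den = 0 := padicValNat.eq_zero_of_not_dvd h2
    rw [padicValRat, hv2] at h0
    omega
  · refine ⟨h1, fun h2 => ?_⟩
    have hv1 : padicValInt 3 u.num = 0 := padicValInt.eq_zero_of_not_dvd h1
    have hv2 : 1 ≤ padicValNat 3 u.den :=
      one_le_padicValNat_of_dvd hden h2
    rw [padicValRat, hv1] at h0
    omega

private lemma key (u t : ℚ) (hu : u ≠ 0) (h0 : padicValRat 3 u = 0)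
    (h : t ^ 2 = u ^ 2 + 1/4) : False := by
  obtain ⟨hn, hd⟩ := num_den_not_dvd u hu h0
  have hud : (u.den : ℚ) ≠ 0 := by exact_mod_cast u.den_nz
  have htd : (t.den : ℚ) ≠ 0 := by exact_mod_cast t.den_nz
  have hun : (u.num : ℚ) = u * u.den := (div_eq_iff hud).1 (Rat.num_div_den u)
  have htn : (t.num : ℚ) = t * t.den := (div_eq_iff htd).1 (Rat.num_div_den t)
  have hZ : ((2 * t.num * u.den)^2 : ℤ) = (2 * u.num * t.den)^2 + (t.den * u.den)^2 := by
    have : ((2 * t.num * u.den : ℤ) : ℚ)^2 = ((2 * u.num * t.den : ℤ) : ℚ)^2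
        + ((t.den * u.den : ℤ) : ℚ)^2 := by
      push_cast
      rw [hun, htn]
      linear_combination (4*(t.den:ℚ)^2*(u.den:ℚ)^2) * h
    exact_mod_cast this
  have h3 : ((2 * (t.num : ZMod 3) * (u.den : ℕ))^2 : ZMod 3)
      = (2 * (u.num : ZMod 3) * (t.den : ℕ))^2 + (((t.den : ℕ) : ZMod 3) * (u.den : ℕ))^2 := by
    have := congrArg (fun z : ℤ => (z : ZMod 3)) hZ
    push_cast at this
    convert this using 2
  have hcn : ((u.num : ZMod 3)) ≠ 0 := by
    rw [Ne, ZMod.intCast_zmod_eq_zero_iff_dvd]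
    exact_mod_cast hn
  have hcd : (((u.den : ℕ) : ZMod 3)) ≠ 0 := by
    rw [Ne, ZMod.natCast_eq_zero_iff]
    exact hd
  obtain ⟨e1, e2⟩ := zmod3_key (t.num : ZMod 3) ((t.den : ℕ) : ZMod 3)
    (u.num : ZMod 3) ((u.den : ℕ) : ZMod 3) hcn hcd h3
  have d1 : (3:ℤ) ∣ t.num := by
    rwa [ZMod.intCast_zmod_eq_zero_iff_dvd] at e1
  have d2 : (3:ℕ) ∣ t.den := by rwa [ZMod.natCast_eq_zero_iff] at e2
  have d1' : (3:ℕ) ∣ t.num.natAbs := Int.natAbs_dvd_natAbs.2 (by simpa using d1)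
  have := Nat.Coprime.eq_one_of_dvd (Nat.Coprime.coprime_dvd_left d1' t.reduced) d2
  norm_num at this

private lemma sqrt_to_rat (y : ℚ) (r : ℚ) (s : ℝ)
    (hs : s ^ 2 = (1/2 : ℝ) ^ 2)
    (h : Real.sqrt ((y : ℝ) ^ 2 + s ^ 2) = r) : r ^ 2 = y ^ 2 + 1/4 := by
  have hnn : (0:ℝ) ≤ (y : ℝ) ^ 2 + s ^ 2 := by positivity
  have hsq := Real.sq_sqrt hnn
  rw [h, hs] at hsq
  have : ((r ^ 2 : ℚ) : ℝ) = ((y ^ 2 + 1/4 : ℚ) : ℝ) := by push_cast; rw [hsq]; ring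
  exact_mod_cast this

theorem no_axis_point (a : ℚ) (ha0 : a ≠ 0) (ha : padicValRat 3 a = 0) :
    ¬ ∃ x : ℚ, 0 ≤ padicValRat 3 x ∧
      (∃ r : ℚ, Real.sqrt ((x : ℝ) ^ 2 + ((0 : ℝ) - 1 / 2) ^ 2) = r) ∧
      (∃ r : ℚ, Real.sqrt ((x : ℝ) ^ 2 + ((0 : ℝ) + 1 / 2) ^ 2) = r) ∧
      (∃ r : ℚ, Real.sqrt (((x : ℝ) - a) ^ 2 + ((0 : ℝ) - 1 / 2) ^ 2) = r) ∧
      (∃ r : ℚ, Real.sqrt (((x : ℝ) - a) ^ 2 + ((0 : ℝ) + 1 / 2) ^ 2) = r) := by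
  rintro ⟨x, hx0, ⟨r1, h1⟩, -, ⟨r2, h2⟩, -⟩
  have hq1 : r1 ^ 2 = x ^ 2 + 1/4 := sqrt_to_rat x r1 _ (by norm_num) h1
  have hq2 : r2 ^ 2 = (x - a) ^ 2 + 1/4 := by
    refine sqrt_to_rat (x - a) r2 ((0:ℝ) - 1/2) (by norm_num) ?_
    rw [← h2]
    norm_num
  by_cases hcase : x ≠ 0 ∧ padicValRat 3 x = 0
  · exact key x r1 hcase.1 hcase.2 hq1
  · have hxa0 : x - a ≠ 0 := by
      intro h
      have hx : x = a := sub_eq_zero.1 h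
      exact hcase ⟨hx ▸ ha0, hx ▸ ha⟩
    have hval : padicValRat 3 (x - a) = 0 := by
      by_cases hx : x = 0
      · rw [hx, zero_sub, padicValRat.neg, ha]
      · have hpos : 0 < padicValRat 3 x := by
          rcases lt_or_eq_of_le hx0 with h | h
          · exact h
          · exact absurd ⟨hx, h.symm⟩ hcase
        have hrw : x - a = -a + x := by ring
        have : padicValRat 3 (-a + x) = padicValRat 3 (-a) :=
          padicValRat.add_eq_of_lt (by rw [← hrw]; exact hxa0) (neg_ne_zero.2 ha0) hx
            (by rw [padicValRat.neg, ha]; exact hpos)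
        rw [hrw, this, padicValRat.neg, ha]
    exact key (x - a) r2 hxa0 hval hq2
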